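/- Let a < b be reals, q : [a, b] → ℝ continuous, c ∈ ℝ, and u : [a, b] → ℝ differentiable with u'(x) = q(x)·u(x) − c for all x ∈ [a, b]. If u(a) = 0 and u(b) = 0, then c = 0 and u(x) = 0 for all x ∈ [a, b]. -/

import Mathlib

/-- uniqueness for the first-order boundary value problem
`u' = q·u − c` on `[a, b]` with `u(a) = u(b) = 0`: necessarily `c = 0`
and `u ≡ 0`. -/
theorem first_order_bvp_uniqueness
    (a b : ℝ) (hab : a < b)
    (q : ℝ → ℝ) (hq : ContinuousOn q (Set.Icc a b))
    (c : ℝ) (u : ℝ → ℝ)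
    (hu : ∀ x ∈ Set.Icc a b,
      HasDerivWithinAt u (q x * u x - c) (Set.Icc a b) x)
    (hua : u a = 0) (hub : u b = 0) :
    c = 0 ∧ ∀ x ∈ Set.Icc a b, u x = 0 := by
  -- continuous extension of q
  set qc : ℝ → ℝ := fun x => q ((Set.projIcc a b hab.le x : Set.Icc a b) : ℝ) with hqc_def
  have hqc : Continuous qc := by
    apply hq.comp_continuous (continuous_subtype_val.comp continuous_projIcc)
    intro x; exact (Set.projIcc a b hab.le x).2
  have hqc_eq : ∀ x ∈ Set.Icc a b, qc x = q x := by
    intro x hx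
    simp [hqc_def, Set.projIcc_of_mem hab.le hx]
  -- antiderivative of qc
  set Q : ℝ → ℝ := fun x => ∫ t in a..x, qc t with hQ_def
  have hQ : ∀ x, HasDerivAt Q (qc x) x := fun x =>
    (hqc.integral_hasStrictDerivAt a x).hasDerivAt
  have hQcont : Continuous Q := by
    have : Differentiable ℝ Q := fun x => (hQ x).differentiableAt
    exact this.continuous
  have hEcont : Continuous fun y => Real.exp (-Q y) := Real.continuous_exp.comp hQcont.neg
  set I : ℝ → ℝ := fun x => ∫ t in a..x, Real.exp (-Q t) with hI_def
  have hI : ∀ x, HasDerivAt I (Real.exp (-Q x)) x := fun x =>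
    (hEcont.integral_hasStrictDerivAt a x).hasDerivAt
  set W : ℝ → ℝ := fun x => u x * Real.exp (-Q x) + c * I x with hW_def
  have hW : ∀ x ∈ Set.Icc a b, HasDerivWithinAt W 0 (Set.Icc a b) x := by
    intro x hx
    have h1 : HasDerivWithinAt (fun y => u y * Real.exp (-Q y))
        ((q x * u x - c) * Real.exp (-Q x) + u x * (Real.exp (-Q x) * -(qc x)))
        (Set.Icc a b) x :=
      (hu x hx).mul (((hQ x).neg.exp).hasDerivWithinAt)
    have h2 : HasDerivWithinAt (fun y => c * I y) (c * Real.exp (-Q x)) (Set.Icc a b) x :=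
      ((hI x).const_mul c).hasDerivWithinAt
    have := h1.add h2
    refine HasDerivWithinAt.congr_deriv this ?_
    rw [hqc_eq x hx]
    ring
  -- W is constant on [a,b]
  have hWcont : ContinuousOn W (Set.Icc a b) := fun x hx => (hW x hx).continuousWithinAt
  have hWconst : ∀ x ∈ Set.Icc a b, W x = W a := by
    apply constant_of_has_deriv_right_zero hWcont
    intro x hx
    exact (hW x (Set.Ico_subset_Icc_self hx)).mono_of_mem_nhdsWithin
      (Icc_mem_nhdsGE_of_mem hx)
  have hIa : I a = 0 := by simp [hI_def]
  have hWa : W a = 0 := by simp [hW_def, hua, hIa]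
  have hIb_pos : 0 < I b := by
    apply intervalIntegral.intervalIntegral_pos_of_pos
    · exact (hEcont.intervalIntegrable a b)
    · intro t; exact Real.exp_pos _
    · exact hab
  have hc : c = 0 := by
    have hWb := hWconst b ⟨hab.le, le_rfl⟩
    rw [hWa, hW_def] at hWb
    simp only [hub, zero_mul, zero_add] at hWb
    rcases mul_eq_zero.mp hWb with h | h
    · exact h
    · exact absurd h hIb_pos.ne'
  refine ⟨hc, fun x hx => ?_⟩
  have := hWconst x hx
  rw [hWa, hW_def] at this
  simp only [hc, zero_mul, add_zero] at this
  have hexp := Real.exp_pos (-Q x)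
  exact (mul_eq_zero.mp this).resolve_right hexp.ne'
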